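/- Let φ₁, …, φ_k (k ≥ 1) be reduction functions on D such that φ₁ is idempotent (φ₁ ∘ φ₁ = φ₁) and for each i ∈ {2, …, k} there exists j < i such that φ_j is stronger than φ_i (φ_j(x) ≤ φ_i(x) for all x). Then the sequence composition x ↦ φ₁(φ₂(⋯φ_k(x)⋯)) is idempotent. -/

import Mathlib

/-- Sequence composition `x ↦ f₁(f₂(⋯f_k(x)⋯))` of a family of functions. -/
def seqComp {D : Type*} {k : ℕ} (f : Fin k → D → D) : D → D :=
  (List.ofFn f).foldr (· ∘ ·) id

private lemma foldr_comp_fix {D : Type*} (l : List (D → D)) (y : D)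
    (h : ∀ f ∈ l, f y = y) : l.foldr (· ∘ ·) id y = y := by
  induction l with
  | nil => rfl
  | cons f t ih =>
    simp only [List.foldr_cons, Function.comp_apply]
    rw [ih (fun g hg => h g (List.mem_cons_of_mem _ hg)), h f List.mem_cons_self]

/-- if `φ₁` is idempotent and, for each `i ≥ 2`, some earlier
`φ_j` (`j < i`) is stronger than `φ_i`, then the sequence composition of the
reduction functions `φ₁, …, φ_k` is idempotent.  (`φ₁` is index `0`.) -/
theorem seqComp_idempotent_of_stronger {D : Type*} [PartialOrder D]
    {k : ℕ} (hk : 0 < k) (φ : Fin k → D → D)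
    (hcontr : ∀ i, ∀ x : D, φ i x ≤ x)
    (hmono : ∀ i, Monotone (φ i))
    (hidem : φ ⟨0, hk⟩ ∘ φ ⟨0, hk⟩ = φ ⟨0, hk⟩)
    (hstr : ∀ i : Fin k, 0 < i.val → ∃ j : Fin k, j < i ∧ ∀ x : D, φ j x ≤ φ i x) :
    ∀ x : D, seqComp φ (seqComp φ x) = seqComp φ x := by
  intro x
  obtain ⟨n, rfl⟩ : ∃ n, k = n + 1 := ⟨k - 1, (Nat.succ_pred_eq_of_pos hk).symm⟩
  set y := seqComp φ x with hy
  have hy0 : y = φ ⟨0, hk⟩ ((List.ofFn (fun i : Fin n => φ i.succ)).foldr (· ∘ ·) id x) := by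
    rw [hy]
    show (List.ofFn φ).foldr (· ∘ ·) id x = _
    rw [List.ofFn_succ]
    rfl
  have key : ∀ m, (hm : m < n + 1) → y ≤ φ ⟨m, hm⟩ y := by
    intro m
    induction m using Nat.strong_induction_on with
    | _ m ih =>
      intro hm
      rcases Nat.eq_zero_or_pos m with rfl | hpos
      · have : φ ⟨0, hm⟩ y = y := by
          rw [hy0]
          have := congrFun hidem ((List.ofFn (fun i : Fin n => φ i.succ)).foldr (· ∘ ·) id x)
          simpa using this
        exact this.ge
      · obtain ⟨j, hj, hjstr⟩ := hstr ⟨m, hm⟩ hpos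
        have hjy : y ≤ φ j y := by
          have := ih j.val hj j.isLt
          simpa using this
        exact hjy.trans (hjstr y)
  have fix : ∀ i : Fin (n + 1), φ i y = y := fun i =>
    le_antisymm (hcontr i y) (by simpa using key i.val i.isLt)
  show (List.ofFn φ).foldr (· ∘ ·) id y = y
  apply foldr_comp_fix
  intro f hf
  obtain ⟨i, rfl⟩ := List.mem_ofFn.mp hf
  exact fix i
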